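/- Suppose the cluster-mean adjusted quantities satisfy |ā_j| ≤ c and |b̄_j| ≤ c for all j, and 0 ≤ d̄_j^(1), d̄_j^(0) ≤ 1 for all j, and let τ_CL = E[Ȳ_T − Ȳ_C]/E[D̄_T − D̄_C] (the denominator assumed nonzero). Then the randomization variance of the recentered cluster-level contrast is bounded: Var[ Ȳ_T − Ȳ_C − τ_CL (D̄_T − D̄_C) ] ≤ ( J² / ((J−m) m (J−1)) ) · ( c + |τ_CL| )², and E[ Ȳ_T − Ȳ_C − τ_CL (D̄_T − D̄_C) ] = 0. -/

import Mathlib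

open Finset

/-- Average of `f` over all size-`m` treated subsets of the `J` clusters
(uniform cluster randomization). -/
noncomputable def clExpect (J m : ℕ) (f : Finset (Fin J) → ℝ) : ℝ :=
  (∑ s ∈ (univ : Finset (Finset (Fin J))).filter (fun s => s.card = m), f s) / (J.choose m)

lemma cardA (J m : ℕ) :
    ((univ : Finset (Finset (Fin J))).filter (fun s => s.card = m)).card = J.choose m := by
  have h : (univ : Finset (Finset (Fin J))).filter (fun s => s.card = m)
      = Finset.powersetCard m univ := by
    rw [powersetCard_eq_filter, powerset_univ]
  rw [h, card_powersetCard, card_univ, Fintype.card_fin]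

lemma card_notmem (J m : ℕ) (j : Fin J) :
    (((univ : Finset (Finset (Fin J))).filter (fun s => s.card = m)).filter
      (fun s => j ∉ s)).card = (J - 1).choose m := by
  have h : ((univ : Finset (Finset (Fin J))).filter (fun s => s.card = m)).filter
      (fun s => j ∉ s) = Finset.powersetCard m (univ.erase j) := by
    ext s
    simp [Finset.mem_powersetCard, Finset.subset_erase, and_comm]
  rw [h, card_powersetCard, card_erase_of_mem (mem_univ j), card_univ, Fintype.card_fin]

lemma card_notmem2 (J m : ℕ) (i j : Fin J) (hij : i ≠ j) :
    (((univ : Finset (Finset (Fin J))).filter (fun s => s.card = m)).filter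
      (fun s => i ∉ s ∧ j ∉ s)).card = (J - 2).choose m := by
  have h : ((univ : Finset (Finset (Fin J))).filter (fun s => s.card = m)).filter
      (fun s => i ∉ s ∧ j ∉ s) = Finset.powersetCard m ((univ.erase j).erase i) := by
    ext s
    simp [Finset.mem_powersetCard, Finset.subset_erase]
    tauto
  rw [h, card_powersetCard, card_erase_of_mem, card_erase_of_mem (mem_univ j),
    card_univ, Fintype.card_fin]
  · rfl
  · simp [hij]

lemma card_mem (J m : ℕ) (hJ : 1 ≤ J) (hm : 1 ≤ m) (j : Fin J) :
    (((univ : Finset (Finset (Fin J))).filter (fun s => s.card = m)).filter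
      (fun s => j ∈ s)).card = (J - 1).choose (m - 1) := by
  have hsplit := Finset.card_filter_add_card_filter_not
    (s := (univ : Finset (Finset (Fin J))).filter (fun s => s.card = m))
    (fun s => j ∈ s)
  rw [cardA] at hsplit
  have h2 : (((univ : Finset (Finset (Fin J))).filter (fun s => s.card = m)).filter
      (fun s => ¬ j ∈ s)).card = (J - 1).choose m := card_notmem J m j
  have hpascal : J.choose m = (J - 1).choose (m - 1) + (J - 1).choose m := by
    have h := Nat.choose_succ_succ (J - 1) (m - 1)
    simp only [Nat.succ_eq_add_one] at h
    rwa [Nat.sub_add_cancel hJ, Nat.sub_add_cancel hm] at h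
  omega

lemma card_split {α : Type*} [DecidableEq α] (A : Finset (Finset α))
    (p q : Finset α → Prop) [DecidablePred p] [DecidablePred q] :
    (A.filter (fun s => p s ∧ q s)).card + (A.filter (fun s => p s ∧ ¬ q s)).card
      = (A.filter p).card := by
  have h := Finset.card_filter_add_card_filter_not (s := A.filter p) q
  rwa [Finset.filter_filter, Finset.filter_filter] at h

lemma card_mem2 (J m : ℕ) (i j : Fin J) (hij : i ≠ j) :
    (((univ : Finset (Finset (Fin J))).filter (fun s => s.card = m)).filter
      (fun s => i ∈ s ∧ j ∈ s)).card + 2 * (J - 1).choose m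
      = J.choose m + (J - 2).choose m := by
  set A := (univ : Finset (Finset (Fin J))).filter (fun s => s.card = m) with hA
  have h1 := Finset.card_filter_add_card_filter_not (s := A) (fun s => i ∈ s)
  have h2 := card_split A (fun s => i ∈ s) (fun s => j ∈ s)
  have h3 := card_split A (fun s => ¬ j ∈ s) (fun s => i ∈ s)
  have e2 : (A.filter (fun s => ¬ j ∈ s ∧ ¬ i ∈ s)).card = (J - 2).choose m :=
    card_notmem2 J m j i (Ne.symm hij)
  have e3 : (A.filter (fun s => ¬ j ∈ s)).card = (J - 1).choose m := card_notmem J m j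
  have e3' : (A.filter (fun s => ¬ i ∈ s)).card = (J - 1).choose m := card_notmem J m i
  have e1 : (A.filter (fun s => i ∈ s ∧ ¬ j ∈ s)).card
      = (A.filter (fun s => ¬ j ∈ s ∧ i ∈ s)).card := by
    congr 1; ext s; simp only [mem_filter]; tauto
  have hN : A.card = J.choose m := by rw [hA]; exact cardA J m
  omega

lemma sum_ite_univ {J : ℕ} (f : Fin J → ℝ) (s : Finset (Fin J)) :
    ∑ j ∈ s, f j = ∑ j : Fin J, if j ∈ s then f j else 0 := by
  rw [← Finset.sum_filter]
  congr 1
  ext x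
  simp

lemma swap1 {J : ℕ} (A : Finset (Finset (Fin J))) (g : Fin J → ℝ) :
    ∑ s ∈ A, ∑ j ∈ s, g j
      = ∑ j : Fin J, ((A.filter (fun s => j ∈ s)).card : ℝ) * g j := by
  calc ∑ s ∈ A, ∑ j ∈ s, g j
      = ∑ s ∈ A, ∑ j : Fin J, if j ∈ s then g j else 0 := by
        exact Finset.sum_congr rfl fun s _ => sum_ite_univ g s
    _ = ∑ j : Fin J, ∑ s ∈ A, if j ∈ s then g j else 0 := Finset.sum_comm
    _ = ∑ j : Fin J, ((A.filter (fun s => j ∈ s)).card : ℝ) * g j := by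
        refine Finset.sum_congr rfl fun j _ => ?_
        rw [← Finset.sum_filter, Finset.sum_const, nsmul_eq_mul]

lemma swap2 {J : ℕ} (A : Finset (Finset (Fin J))) (g : Fin J → ℝ) :
    ∑ s ∈ A, (∑ j ∈ s, g j) ^ 2
      = ∑ i : Fin J, ∑ j : Fin J,
          ((A.filter (fun s => i ∈ s ∧ j ∈ s)).card : ℝ) * (g i * g j) := by
  calc ∑ s ∈ A, (∑ j ∈ s, g j) ^ 2
      = ∑ s ∈ A, ∑ i : Fin J, ∑ j : Fin J,
          if i ∈ s ∧ j ∈ s then g i * g j else 0 := by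
        refine Finset.sum_congr rfl fun s _ => ?_
        rw [sq, Finset.sum_mul_sum]
        rw [sum_ite_univ (fun i => ∑ j ∈ s, g i * g j) s]
        refine Finset.sum_congr rfl fun i _ => ?_
        by_cases hi : i ∈ s
        · simp only [hi, if_true, true_and]
          rw [sum_ite_univ (fun j => g i * g j) s]
        · simp [hi]
    _ = ∑ i : Fin J, ∑ j : Fin J, ∑ s ∈ A,
          if i ∈ s ∧ j ∈ s then g i * g j else 0 := by
        rw [Finset.sum_comm]
        exact Finset.sum_congr rfl fun i _ => Finset.sum_comm
    _ = ∑ i : Fin J, ∑ j : Fin J,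
          ((A.filter (fun s => i ∈ s ∧ j ∈ s)).card : ℝ) * (g i * g j) := by
        refine Finset.sum_congr rfl fun i _ => Finset.sum_congr rfl fun j _ => ?_
        rw [← Finset.sum_filter, Finset.sum_const, nsmul_eq_mul]

lemma moment1 (J m : ℕ) (hJ : 1 ≤ J) (hm : 1 ≤ m) (g : Fin J → ℝ) :
    ∑ s ∈ (univ : Finset (Finset (Fin J))).filter (fun s => s.card = m), ∑ j ∈ s, g j
      = ((J - 1).choose (m - 1) : ℝ) * ∑ j : Fin J, g j := by
  rw [swap1, Finset.mul_sum]
  exact Finset.sum_congr rfl fun j _ => by rw [card_mem J m hJ hm j]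

lemma moment2 (J m : ℕ) (hJ : 1 ≤ J) (hm : 1 ≤ m) (g : Fin J → ℝ) :
    ∑ s ∈ (univ : Finset (Finset (Fin J))).filter (fun s => s.card = m),
        (∑ j ∈ s, g j) ^ 2
      = ((J - 1).choose (m - 1) : ℝ) * ∑ j : Fin J, (g j) ^ 2
        + (((J.choose m : ℝ) + ((J - 2).choose m : ℝ)) - 2 * ((J - 1).choose m : ℝ))
          * ((∑ j : Fin J, g j) ^ 2 - ∑ j : Fin J, (g j) ^ 2) := by
  set A := (univ : Finset (Finset (Fin J))).filter (fun s => s.card = m) with hA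
  set C1 : ℝ := ((J - 1).choose (m - 1) : ℝ) with hC1
  set C2 : ℝ := ((J.choose m : ℝ) + ((J - 2).choose m : ℝ)) - 2 * ((J - 1).choose m : ℝ)
    with hC2
  set S : ℝ := ∑ j : Fin J, g j with hS
  rw [swap2]
  have key : ∀ i : Fin J, ∑ j : Fin J,
      ((A.filter (fun s => i ∈ s ∧ j ∈ s)).card : ℝ) * (g i * g j)
      = C1 * (g i) ^ 2 + C2 * (g i * (S - g i)) := by
    intro i
    rw [← Finset.add_sum_erase _ _ (Finset.mem_univ i)]
    have hii : ((A.filter (fun s => i ∈ s ∧ i ∈ s)).card : ℝ) = C1 := by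
      have : A.filter (fun s => i ∈ s ∧ i ∈ s) = A.filter (fun s => i ∈ s) := by
        ext s; simp only [Finset.mem_filter]; tauto
      rw [this, hA, card_mem J m hJ hm i, hC1]
    have hoff : ∀ j ∈ univ.erase i,
        ((A.filter (fun s => i ∈ s ∧ j ∈ s)).card : ℝ) * (g i * g j)
          = C2 * (g i * g j) := by
      intro j hj
      have hij : i ≠ j := (Finset.ne_of_mem_erase hj).symm
      have hcount := card_mem2 J m i j hij
      have : ((A.filter (fun s => i ∈ s ∧ j ∈ s)).card : ℝ) = C2 := by
        rw [hC2]
        have := congrArg (fun n : ℕ => (n : ℝ)) hcount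
        push_cast at this
        rw [hA]
        linarith
      rw [this]
    rw [Finset.sum_congr rfl hoff, ← Finset.mul_sum, ← Finset.mul_sum,
      Finset.sum_erase_eq_sub (Finset.mem_univ i), ← hS, hii]
    ring
  rw [Finset.sum_congr rfl (fun i _ => key i), Finset.sum_add_distrib,
    ← Finset.mul_sum, ← Finset.mul_sum]
  have hsum : ∑ i : Fin J, g i * (S - g i) = S ^ 2 - ∑ i : Fin J, (g i) ^ 2 := by
    simp only [mul_sub]
    rw [Finset.sum_sub_distrib, ← Finset.sum_mul, ← hS, sq]
    congr 1
    exact Finset.sum_congr rfl fun i _ => (sq (g i)).symm ▸ rfl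
  rw [hsum]

lemma cid1 (J m : ℕ) (hJ : 1 ≤ J) (hm : 1 ≤ m) :
    J * (J - 1).choose (m - 1) = J.choose m * m := by
  have h := Nat.add_one_mul_choose_eq (J - 1) (m - 1)
  rwa [Nat.sub_add_cancel hJ, Nat.sub_add_cancel hm] at h

lemma cid2 (J m : ℕ) (hJ : 2 ≤ J) (hm : 2 ≤ m) :
    J.choose m + (J - 2).choose m = 2 * (J - 1).choose m + (J - 2).choose (m - 2) := by
  have p1 : J.choose m = (J - 1).choose (m - 1) + (J - 1).choose m := by
    have h := Nat.choose_succ_succ (J - 1) (m - 1)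
    simp only [Nat.succ_eq_add_one] at h
    rwa [Nat.sub_add_cancel (by omega), Nat.sub_add_cancel (by omega)] at h
  have p2 : (J - 1).choose m = (J - 2).choose (m - 1) + (J - 2).choose m := by
    have h := Nat.choose_succ_succ (J - 2) (m - 1)
    simp only [Nat.succ_eq_add_one] at h
    rwa [show J - 2 + 1 = J - 1 by omega, Nat.sub_add_cancel (by omega)] at h
  have p3 : (J - 1).choose (m - 1) = (J - 2).choose (m - 2) + (J - 2).choose (m - 1) := by
    have h := Nat.choose_succ_succ (J - 2) (m - 2)
    simp only [Nat.succ_eq_add_one] at h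
    rwa [show J - 2 + 1 = J - 1 by omega, show m - 2 + 1 = m - 1 by omega] at h
  omega

lemma rid1 (J m : ℕ) (hJ : 1 ≤ J) (hm : 1 ≤ m) :
    (J : ℝ) * ((J - 1).choose (m - 1) : ℝ) = (m : ℝ) * (J.choose m : ℝ) := by
  have h := cid1 J m hJ hm
  have := congrArg (fun n : ℕ => (n : ℝ)) h
  push_cast at this
  linarith

lemma rid2 (J m : ℕ) (hJ : 2 ≤ J) (hm : 1 ≤ m) (hmJ : m ≤ J) :
    (J : ℝ) * ((J : ℝ) - 1) *
        (((J.choose m : ℝ) + ((J - 2).choose m : ℝ)) - 2 * ((J - 1).choose m : ℝ))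
      = (m : ℝ) * ((m : ℝ) - 1) * (J.choose m : ℝ) := by
  rcases eq_or_lt_of_le hm with h1 | h2
  · -- m = 1
    subst h1
    rw [Nat.choose_one_right, Nat.choose_one_right, Nat.choose_one_right]
    have c1 : ((J - 2 : ℕ) : ℝ) = (J : ℝ) - 2 := by
      have : ((J - 2 : ℕ) : ℝ) = ((J : ℕ) : ℝ) - ((2 : ℕ) : ℝ) := by
        rw [Nat.cast_sub hJ]
      simpa using this
    have c2 : ((J - 1 : ℕ) : ℝ) = (J : ℝ) - 1 := by
      rw [Nat.cast_sub (by omega)]; simp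
    rw [c1, c2]
    push_cast
    ring
  · -- m ≥ 2
    have hm2 : 2 ≤ m := h2
    have hnat := cid2 J m hJ hm2
    have hcast := congrArg (fun n : ℕ => (n : ℝ)) hnat
    push_cast at hcast
    have hr1 : ((J : ℝ) - 1) * ((J - 2).choose (m - 2) : ℝ)
        = ((m : ℝ) - 1) * ((J - 1).choose (m - 1) : ℝ) := by
      have h := rid1 (J - 1) (m - 1) (by omega) (by omega)
      rw [show J - 1 - 1 = J - 2 by omega, show m - 1 - 1 = m - 2 by omega] at h
      have cJ : ((J - 1 : ℕ) : ℝ) = (J : ℝ) - 1 := by rw [Nat.cast_sub (by omega)]; simp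
      have cm : ((m - 1 : ℕ) : ℝ) = (m : ℝ) - 1 := by rw [Nat.cast_sub (by omega)]; simp
      rw [cJ, cm] at h
      exact h
    have hr2 := rid1 J m (by omega) (by omega)
    -- J*(J-1)*(C2expr) where C2expr = choose(J-2,m-2) by hcast
    have hC2 : ((J.choose m : ℝ) + ((J - 2).choose m : ℝ)) - 2 * ((J - 1).choose m : ℝ)
        = ((J - 2).choose (m - 2) : ℝ) := by linarith
    rw [hC2]
    calc (J : ℝ) * ((J : ℝ) - 1) * ((J - 2).choose (m - 2) : ℝ)
        = (J : ℝ) * (((J : ℝ) - 1) * ((J - 2).choose (m - 2) : ℝ)) := by ring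
      _ = (J : ℝ) * (((m : ℝ) - 1) * ((J - 1).choose (m - 1) : ℝ)) := by rw [hr1]
      _ = ((m : ℝ) - 1) * ((J : ℝ) * ((J - 1).choose (m - 1) : ℝ)) := by ring
      _ = ((m : ℝ) - 1) * ((m : ℝ) * (J.choose m : ℝ)) := by rw [hr2]
      _ = (m : ℝ) * ((m : ℝ) - 1) * (J.choose m : ℝ) := by ring

set_option maxHeartbeats 2000000 in
/-- With bounded cluster-mean outcomes and compliances in `[0,1]`, the recentered
cluster-level contrast `Ȳ_T − Ȳ_C − τ_CL (D̄_T − D̄_C)` has randomization mean zero and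
variance at most `J²/((J−m)m(J−1)) (c + |τ_CL|)²`. -/
theorem stmt15
    (J m : ℕ) (hJ : 2 ≤ J) (hm0 : 0 < m) (hmJ : m < J)
    -- fixed cluster-mean outcomes (treated/control) and compliances (treated/control)
    (a b d1 d0 : Fin J → ℝ) (c : ℝ)
    (ha : ∀ j, |a j| ≤ c) (hb : ∀ j, |b j| ≤ c)
    (hd1 : ∀ j, 0 ≤ d1 j ∧ d1 j ≤ 1) (hd0 : ∀ j, 0 ≤ d0 j ∧ d0 j ≤ 1)
    -- Ȳ_T − Ȳ_C and D̄_T − D̄_C as functions of the treated set s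
    (Ydiff Ddiff : Finset (Fin J) → ℝ)
    (hYdiff : ∀ s, Ydiff s = (∑ j ∈ s, a j) / m - (∑ j ∈ sᶜ, b j) / ((J : ℝ) - m))
    (hDdiff : ∀ s, Ddiff s = (∑ j ∈ s, d1 j) / m - (∑ j ∈ sᶜ, d0 j) / ((J : ℝ) - m))
    (hden : clExpect J m Ddiff ≠ 0)
    (τCL : ℝ) (hτCL : τCL = clExpect J m Ydiff / clExpect J m Ddiff) :
    clExpect J m (fun s => Ydiff s - τCL * Ddiff s) = 0 ∧
    clExpect J m (fun s =>
        (Ydiff s - τCL * Ddiff s -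
          clExpect J m (fun s' => Ydiff s' - τCL * Ddiff s')) ^ 2) ≤
      (J : ℝ) ^ 2 / (((J : ℝ) - m) * m * ((J : ℝ) - 1)) * (c + |τCL|) ^ 2 := by
  have hmR : (0:ℝ) < (m:ℝ) := by exact_mod_cast hm0
  have hmJR : (m:ℝ) < (J:ℝ) := by exact_mod_cast hmJ
  have hJmR : (0:ℝ) < (J:ℝ) - (m:ℝ) := by linarith
  have hJ2R : (2:ℝ) ≤ (J:ℝ) := by exact_mod_cast hJ
  have hJ1R : (0:ℝ) < (J:ℝ) - 1 := by linarith
  have hJR : (0:ℝ) < (J:ℝ) := by linarith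
  have hNpos : (0:ℝ) < (J.choose m : ℝ) := by
    exact_mod_cast Nat.choose_pos (le_of_lt hmJ)
  -- Part 1: mean zero
  have part1 : clExpect J m (fun s => Ydiff s - τCL * Ddiff s) = 0 := by
    have hlin : clExpect J m (fun s => Ydiff s - τCL * Ddiff s)
        = clExpect J m Ydiff - τCL * clExpect J m Ddiff := by
      simp only [clExpect]
      rw [Finset.sum_sub_distrib, ← Finset.mul_sum, sub_div, mul_div_assoc]
    rw [hlin, hτCL, div_mul_cancel₀ _ hden, sub_self]
  refine ⟨part1, ?_⟩
  rw [part1]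
  simp only [sub_zero]
  -- decomposition X s = ∑_{j∈s} g j − β
  have hXg : ∀ s : Finset (Fin J), Ydiff s - τCL * Ddiff s
      = (∑ j ∈ s, ((a j - τCL * d1 j) / (m:ℝ) + (b j - τCL * d0 j) / ((J:ℝ) - (m:ℝ))))
        - (∑ j : Fin J, (b j - τCL * d0 j)) / ((J:ℝ) - (m:ℝ)) := by
    intro s
    rw [hYdiff s, hDdiff s]
    have h1 : ∑ j ∈ sᶜ, b j = (∑ j : Fin J, b j) - ∑ j ∈ s, b j := by
      have := Finset.sum_compl_add_sum s b; linarith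
    have h2 : ∑ j ∈ sᶜ, d0 j = (∑ j : Fin J, d0 j) - ∑ j ∈ s, d0 j := by
      have := Finset.sum_compl_add_sum s d0; linarith
    rw [h1, h2, Finset.sum_add_distrib, ← Finset.sum_div, ← Finset.sum_div,
      Finset.sum_sub_distrib, Finset.sum_sub_distrib, Finset.sum_sub_distrib,
      ← Finset.mul_sum, ← Finset.mul_sum, ← Finset.mul_sum]
    field_simp
    ring
  set g : Fin J → ℝ :=
    fun j => (a j - τCL * d1 j) / (m:ℝ) + (b j - τCL * d0 j) / ((J:ℝ) - (m:ℝ)) with hg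
  set β : ℝ := (∑ j : Fin J, (b j - τCL * d0 j)) / ((J:ℝ) - (m:ℝ)) with hβdef
  simp only [clExpect]
  set A := (univ : Finset (Finset (Fin J))).filter (fun s => s.card = m) with hA
  set N : ℝ := (J.choose m : ℝ) with hN
  set C1 : ℝ := ((J - 1).choose (m - 1) : ℝ) with hC1
  set C2 : ℝ := ((J.choose m : ℝ) + ((J - 2).choose m : ℝ)) - 2 * ((J - 1).choose m : ℝ)
    with hC2
  set Sg : ℝ := ∑ j : Fin J, g j with hSg
  set G2 : ℝ := ∑ j : Fin J, (g j) ^ 2 with hG2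
  have hAcard : ((A.card : ℕ) : ℝ) = N := by rw [hA, cardA J m, hN]
  have hsum1 : ∑ s ∈ A, ∑ j ∈ s, g j = C1 * Sg := by
    have h := moment1 J m (by omega) (by omega) g
    rw [← hA, ← hC1, ← hSg] at h; exact h
  have hsum2 : ∑ s ∈ A, (∑ j ∈ s, g j) ^ 2 = C1 * G2 + C2 * (Sg ^ 2 - G2) := by
    have h := moment2 J m (by omega) (by omega) g
    rw [← hA, ← hC1, ← hC2, ← hSg, ← hG2] at h; exact h
  have id1 : (J:ℝ) * C1 = (m:ℝ) * N := by
    have h := rid1 J m (by omega) (by omega)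
    rw [← hC1, ← hN] at h; exact h
  have id2 : (J:ℝ) * ((J:ℝ) - 1) * C2 = (m:ℝ) * ((m:ℝ) - 1) * N := by
    have h := rid2 J m hJ (by omega) (le_of_lt hmJ)
    rw [← hC2, ← hN] at h; exact h
  -- sum of X over A is zero
  have hEz : ∑ s ∈ A, (Ydiff s - τCL * Ddiff s) = 0 := by
    have h := part1
    simp only [clExpect] at h
    rw [← hA, ← hN] at h
    rcases div_eq_zero_iff.mp h with h' | h'
    · exact h'
    · exact absurd h' (ne_of_gt hNpos)
  have hsumX : ∑ s ∈ A, (Ydiff s - τCL * Ddiff s) = C1 * Sg - N * β := by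
    rw [Finset.sum_congr rfl (fun s _ => hXg s), Finset.sum_sub_distrib, hsum1,
      Finset.sum_const, nsmul_eq_mul, hAcard]
  have hβeq : C1 * Sg = N * β := by rw [hsumX] at hEz; linarith
  have hβv : β = C1 * Sg / N := by
    rw [eq_div_iff (ne_of_gt hNpos)]; linarith
  -- second moment
  have hS2 : ∑ s ∈ A, (Ydiff s - τCL * Ddiff s) ^ 2
      = C1 * G2 + C2 * (Sg ^ 2 - G2) - C1 ^ 2 * Sg ^ 2 / N := by
    have expand : ∀ s : Finset (Fin J), (Ydiff s - τCL * Ddiff s) ^ 2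
        = (∑ j ∈ s, g j) ^ 2 - 2 * β * (∑ j ∈ s, g j) + β ^ 2 := fun s => by
      rw [hXg s]; ring
    rw [Finset.sum_congr rfl (fun s _ => expand s), Finset.sum_add_distrib,
      Finset.sum_sub_distrib, ← Finset.mul_sum, hsum1, hsum2,
      Finset.sum_const, nsmul_eq_mul, hAcard, hβv]
    field_simp
    ring
  rw [hS2]
  -- variance inequality
  have hC1v : C1 = (m:ℝ) * N / (J:ℝ) := by
    rw [eq_div_iff (ne_of_gt hJR)]; linear_combination id1
  have hC2v : C2 = (m:ℝ) * ((m:ℝ) - 1) * N / ((J:ℝ) * ((J:ℝ) - 1)) := by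
    rw [eq_div_iff (by positivity)]; linear_combination id2
  have hVid : C1 * G2 + C2 * (Sg ^ 2 - G2) - C1 ^ 2 * Sg ^ 2 / N
      = N * ((m:ℝ) * ((J:ℝ) - (m:ℝ)) / ((J:ℝ) * ((J:ℝ) - 1))) * G2
        - N * ((m:ℝ) * ((J:ℝ) - (m:ℝ)) / ((J:ℝ) ^ 2 * ((J:ℝ) - 1))) * Sg ^ 2 := by
    rw [hC1v, hC2v]
    field_simp
    ring
  have key : (C1 * G2 + C2 * (Sg ^ 2 - G2) - C1 ^ 2 * Sg ^ 2 / N) / N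
      ≤ (m:ℝ) * ((J:ℝ) - (m:ℝ)) / ((J:ℝ) * ((J:ℝ) - 1)) * G2 := by
    rw [hVid, sub_div, mul_assoc, mul_div_cancel_left₀ _ (ne_of_gt hNpos),
      mul_assoc, mul_div_cancel_left₀ _ (ne_of_gt hNpos)]
    have : (0:ℝ) ≤ (m:ℝ) * ((J:ℝ) - (m:ℝ)) / ((J:ℝ) ^ 2 * ((J:ℝ) - 1)) * Sg ^ 2 := by
      positivity
    linarith
  -- bound on G2
  have hc0 : 0 ≤ c := le_trans (abs_nonneg _) (ha ⟨0, by omega⟩)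
  have hcτ : 0 ≤ c + |τCL| := by positivity
  have hgb : ∀ j : Fin J, |g j| ≤ (c + |τCL|) * (J:ℝ) / ((m:ℝ) * ((J:ℝ) - (m:ℝ))) := by
    intro j
    have hxj : |a j - τCL * d1 j| ≤ c + |τCL| := by
      calc |a j - τCL * d1 j| ≤ |a j| + |τCL * d1 j| := abs_sub _ _
        _ ≤ c + |τCL| := by
            have h1 : |τCL * d1 j| ≤ |τCL| := by
              rw [abs_mul]
              have : |d1 j| ≤ 1 := abs_le.mpr ⟨by linarith [(hd1 j).1], (hd1 j).2⟩
              calc |τCL| * |d1 j| ≤ |τCL| * 1 := by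
                    exact mul_le_mul_of_nonneg_left this (abs_nonneg _)
                _ = |τCL| := mul_one _
            linarith [ha j]
    have hyj : |b j - τCL * d0 j| ≤ c + |τCL| := by
      calc |b j - τCL * d0 j| ≤ |b j| + |τCL * d0 j| := abs_sub _ _
        _ ≤ c + |τCL| := by
            have h1 : |τCL * d0 j| ≤ |τCL| := by
              rw [abs_mul]
              have : |d0 j| ≤ 1 := abs_le.mpr ⟨by linarith [(hd0 j).1], (hd0 j).2⟩
              calc |τCL| * |d0 j| ≤ |τCL| * 1 := by
                    exact mul_le_mul_of_nonneg_left this (abs_nonneg _)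
                _ = |τCL| := mul_one _
            linarith [hb j]
    have step : |g j| ≤ (c + |τCL|) / (m:ℝ) + (c + |τCL|) / ((J:ℝ) - (m:ℝ)) := by
      rw [hg]
      calc |(a j - τCL * d1 j) / (m:ℝ) + (b j - τCL * d0 j) / ((J:ℝ) - (m:ℝ))|
          ≤ |(a j - τCL * d1 j) / (m:ℝ)| + |(b j - τCL * d0 j) / ((J:ℝ) - (m:ℝ))| :=
            abs_add_le _ _
        _ = |a j - τCL * d1 j| / (m:ℝ) + |b j - τCL * d0 j| / ((J:ℝ) - (m:ℝ)) := by
            rw [abs_div, abs_div, abs_of_pos hmR, abs_of_pos hJmR]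
        _ ≤ (c + |τCL|) / (m:ℝ) + (c + |τCL|) / ((J:ℝ) - (m:ℝ)) := by gcongr
    have heq : (c + |τCL|) / (m:ℝ) + (c + |τCL|) / ((J:ℝ) - (m:ℝ))
        = (c + |τCL|) * (J:ℝ) / ((m:ℝ) * ((J:ℝ) - (m:ℝ))) := by
      field_simp
      ring
    linarith [heq ▸ step]
  have hG2b : G2 ≤ (J:ℝ) * ((c + |τCL|) * (J:ℝ) / ((m:ℝ) * ((J:ℝ) - (m:ℝ)))) ^ 2 := by
    rw [hG2]
    calc ∑ j : Fin J, (g j) ^ 2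
        ≤ ∑ j : Fin J, ((c + |τCL|) * (J:ℝ) / ((m:ℝ) * ((J:ℝ) - (m:ℝ)))) ^ 2 := by
          refine Finset.sum_le_sum fun j _ => ?_
          calc (g j) ^ 2 = |g j| ^ 2 := (sq_abs _).symm
            _ ≤ ((c + |τCL|) * (J:ℝ) / ((m:ℝ) * ((J:ℝ) - (m:ℝ)))) ^ 2 :=
                pow_le_pow_left₀ (abs_nonneg _) (hgb j) 2
      _ = (J:ℝ) * ((c + |τCL|) * (J:ℝ) / ((m:ℝ) * ((J:ℝ) - (m:ℝ)))) ^ 2 := by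
          rw [Finset.sum_const, Finset.card_univ, Fintype.card_fin, nsmul_eq_mul]
  calc (C1 * G2 + C2 * (Sg ^ 2 - G2) - C1 ^ 2 * Sg ^ 2 / N) / N
      ≤ (m:ℝ) * ((J:ℝ) - (m:ℝ)) / ((J:ℝ) * ((J:ℝ) - 1)) * G2 := key
    _ ≤ (m:ℝ) * ((J:ℝ) - (m:ℝ)) / ((J:ℝ) * ((J:ℝ) - 1))
          * ((J:ℝ) * ((c + |τCL|) * (J:ℝ) / ((m:ℝ) * ((J:ℝ) - (m:ℝ)))) ^ 2) := by
        exact mul_le_mul_of_nonneg_left hG2b (by positivity)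
    _ = (J:ℝ) ^ 2 / (((J:ℝ) - (m:ℝ)) * (m:ℝ) * ((J:ℝ) - 1)) * (c + |τCL|) ^ 2 := by
        field_simp
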